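/- arXiv:1108.2463 — 2 statements merged into one kernel-verified Lean document; each statement's English description precedes it below -/
import Mathlib

section
/- Let f, g : 𝕋 → ℂ be continuous functions on the circle 𝕋 = AddCircle (2π), let n ≥ 1, and let α ∈ ℂ satisfy α^n = 1. Then (∑_{k=0}^{n−1} α^k S_{2πk/n} f) ⋆ (∑_{l=0}^{n−1} α^l S_{2πl/n} g) = n · ∑_{j=0}^{n−1} α^j S_{2πj/n} (f ⋆ g), where S_{2πk/n} denotes the shift by the image of the real number 2πk/n in 𝕋. -/
open MeasureTheory Real Set Pointwise

noncomputable section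

abbrev 𝕋 : Type := AddCircle (2 * π)

instance : Fact (0 < 2 * π) := ⟨by positivity⟩

/-- Natural projection `ℝ → 𝕋`. -/
def proj : ℝ → 𝕋 := fun r => (r : 𝕋)

/-- Convolution of functions on the circle with respect to Haar (Lebesgue) measure. -/
def circConv (f g : 𝕋 → ℂ) : 𝕋 → ℂ := fun x => ∫ t : 𝕋, f t * g (x - t)

/-- Shift operator `(S_y f)(x) = f (x - y)`. -/
def shift (y : 𝕋) (f : 𝕋 → ℂ) : 𝕋 → ℂ := fun x => f (x - y)

lemma cont_integrable {h : 𝕋 → ℂ} (hh : Continuous h) : Integrable h := by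
  rw [← integrableOn_univ]
  exact hh.locallyIntegrable.integrableOn_isCompact isCompact_univ

lemma proj_two_pi_nat (m : ℕ) : proj (2 * π * m) = 0 := by
  show ((2 * π * m : ℝ) : AddCircle (2 * π)) = 0
  rw [AddCircle.coe_eq_zero_iff]
  exact ⟨m, by rw [zsmul_eq_mul]; push_cast; ring⟩

lemma proj_add (a b : ℝ) : proj (a + b) = proj a + proj b := rfl

theorem conv_of_root_of_unity_combinations (n : ℕ) (hn : 1 ≤ n)
    (f g : 𝕋 → ℂ) (hf : Continuous f) (hg : Continuous g)
    (α : ℂ) (hα : α ^ n = 1) :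
    circConv (fun x => ∑ k : Fin n, α ^ (k : ℕ) * shift (proj (2 * π * k / n)) f x)
             (fun x => ∑ l : Fin n, α ^ (l : ℕ) * shift (proj (2 * π * l / n)) g x)
    = fun x => (n : ℂ) *
        ∑ j : Fin n, α ^ (j : ℕ) * shift (proj (2 * π * j / n)) (circConv f g) x := by
  haveI : NeZero n := ⟨by omega⟩
  have hn0 : (n : ℝ) ≠ 0 := by positivity
  -- α^m only depends on m % n
  have hpow : ∀ m : ℕ, α ^ m = α ^ (m % n) := by
    intro m
    conv_lhs => rw [← Nat.mod_add_div m n, pow_add, pow_mul, hα, one_pow, mul_one]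
  -- proj (2πm/n) only depends on m % n
  have hproj : ∀ m : ℕ, proj (2 * π * m / n) = proj (2 * π * (m % n : ℕ) / n) := by
    intro m
    have hm : (2 * π * m / n : ℝ) = 2 * π * (m % n : ℕ) / n + 2 * π * (m / n : ℕ) := by
      have h : ((m % n : ℕ) : ℝ) + (n : ℝ) * ((m / n : ℕ) : ℝ) = (m : ℝ) := by
        exact_mod_cast congrArg (Nat.cast (R := ℝ)) (Nat.mod_add_div m n)
      rw [← h, mul_add, add_div]
      congr 1
      rw [show (2 * π * ((n : ℝ) * ((m / n : ℕ) : ℝ))) = (2 * π * ((m / n : ℕ) : ℝ)) * n by ring]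
      exact mul_div_cancel_right₀ _ hn0
    rw [hm, proj_add, proj_two_pi_nat, add_zero]
  funext x
  set F : Fin n → ℂ := fun j => α ^ (j : ℕ) * circConv f g (x - proj (2 * π * j / n)) with hF
  -- convolution of shifted functions
  have key : ∀ a b : 𝕋, (∫ t : 𝕋, f (t - a) * g (x - t - b)) = circConv f g (x - (a + b)) := by
    intro a b
    rw [← integral_add_right_eq_self (μ := volume) (fun t : 𝕋 => f (t - a) * g (x - t - b)) a]
    simp only [add_sub_cancel_right, circConv]
    congr 1
    funext t
    congr 2
    abel
  -- expand bilinearly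
  have expand : circConv (fun x => ∑ k : Fin n, α ^ (k : ℕ) * shift (proj (2 * π * k / n)) f x)
      (fun x => ∑ l : Fin n, α ^ (l : ℕ) * shift (proj (2 * π * l / n)) g x) x
      = ∑ k : Fin n, ∑ l : Fin n, (α ^ (k : ℕ) * α ^ (l : ℕ)) *
          ∫ t : 𝕋, f (t - proj (2 * π * k / n)) * g (x - t - proj (2 * π * l / n)) := by
    show (∫ t : 𝕋, (∑ k : Fin n, α ^ (k : ℕ) * shift (proj (2 * π * k / n)) f t) *
        (∑ l : Fin n, α ^ (l : ℕ) * shift (proj (2 * π * l / n)) g (x - t))) = _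
    have : ∀ t : 𝕋, (∑ k : Fin n, α ^ (k : ℕ) * shift (proj (2 * π * k / n)) f t) *
        (∑ l : Fin n, α ^ (l : ℕ) * shift (proj (2 * π * l / n)) g (x - t))
        = ∑ k : Fin n, ∑ l : Fin n, (α ^ (k : ℕ) * α ^ (l : ℕ)) *
            (f (t - proj (2 * π * k / n)) * g (x - t - proj (2 * π * l / n))) := by
      intro t
      rw [Finset.sum_mul_sum]
      refine Finset.sum_congr rfl fun k _ => Finset.sum_congr rfl fun l _ => ?_
      simp only [shift]
      ring
    simp only [this]
    rw [integral_finset_sum]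
    · refine Finset.sum_congr rfl fun k _ => ?_
      rw [integral_finset_sum]
      · exact Finset.sum_congr rfl fun l _ => integral_const_mul _ _
      · intro l _
        refine Integrable.const_mul (cont_integrable ?_) _
        exact ((hf.comp (continuous_id.sub continuous_const)).mul
          (hg.comp ((continuous_const.sub continuous_id).sub continuous_const)))
    · intro k _
      refine integrable_finset_sum _ fun l _ => ?_
      refine Integrable.const_mul (cont_integrable ?_) _
      exact ((hf.comp (continuous_id.sub continuous_const)).mul
        (hg.comp ((continuous_const.sub continuous_id).sub continuous_const)))
  rw [expand]
  -- each (k,l) term equals F (k + l)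
  have term_eq : ∀ k l : Fin n, (α ^ (k : ℕ) * α ^ (l : ℕ)) *
      (∫ t : 𝕋, f (t - proj (2 * π * k / n)) * g (x - t - proj (2 * π * l / n)))
      = F (k + l) := by
    intro k l
    rw [key]
    have hsum : proj (2 * π * k / n) + proj (2 * π * l / n)
        = proj (2 * π * ((k : ℕ) + (l : ℕ) : ℕ) / n) := by
      rw [← proj_add]
      congr 1
      push_cast
      field_simp
    rw [hsum, ← pow_add, hpow, hproj]
    have hval : ((k + l : Fin n) : ℕ) = ((k : ℕ) + (l : ℕ)) % n := Fin.val_add k l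
    show _ = α ^ ((k + l : Fin n) : ℕ) *
      circConv f g (x - proj (2 * π * ((k + l : Fin n) : ℕ) / n))
    rw [hval]
  simp only [term_eq]
  -- reindex and count
  have reindex : ∀ k : Fin n, (∑ l : Fin n, F (k + l)) = ∑ j : Fin n, F j := by
    intro k
    exact Fintype.sum_equiv (Equiv.addLeft k) _ _ (fun l => rfl)
  simp only [reindex, Finset.sum_const, Finset.card_univ, Fintype.card_fin, nsmul_eq_mul]
  rfl

end
end

section
/- Let f : 𝕋 → ℂ be a continuous function on the circle 𝕋 = AddCircle (2π), let n ≥ 1, let p ≥ 1, and let α ∈ ℂ satisfy α^n = 1. Then (∑_{k=0}^{n−1} α^k S_{2πk/n} f)^{⋆p} = n^{p−1} · ∑_{j=0}^{n−1} α^j S_{2πj/n} (f^{⋆p}), where h^{⋆p} denotes the p-fold convolution h ⋆ h ⋆ ⋯ ⋆ h and S_{2πk/n} denotes the shift by the image of the real number 2πk/n in 𝕋. -/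
open MeasureTheory Real Set Pointwise

noncomputable section

/-- `circConvPow f k` is the `(k+1)`-fold convolution `f ⋆ f ⋆ ⋯ ⋆ f`. -/
def circConvPow (f : 𝕋 → ℂ) : ℕ → (𝕋 → ℂ)
  | 0 => f
  | k + 1 => circConv (circConvPow f k) f

lemma cont_integrable_s4 {f : 𝕋 → ℂ} (hf : Continuous f) : Integrable f volume :=
  hf.integrable_of_hasCompactSupport (HasCompactSupport.of_compactSpace f)

lemma shift_cont (y : 𝕋) {f : 𝕋 → ℂ} (hf : Continuous f) : Continuous (shift y f) :=
  hf.comp (continuous_id.sub continuous_const)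

lemma circConv_cont {f g : 𝕋 → ℂ} (hf : Continuous f) (hg : Continuous g) :
    Continuous (circConv f g) := by
  have h : circConv f g = convolution f g (ContinuousLinearMap.mul ℝ ℂ) volume := rfl
  rw [h]
  exact (HasCompactSupport.of_compactSpace g).continuous_convolution_right _
    (cont_integrable_s4 hf).locallyIntegrable hg

lemma circConvPow_cont {f : 𝕋 → ℂ} (hf : Continuous f) (q : ℕ) :
    Continuous (circConvPow f q) := by
  induction q with
  | zero => exact hf
  | succ k ih => exact circConv_cont ih hf

lemma circConv_shift (a b : 𝕋) (f g : 𝕋 → ℂ) :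
    circConv (shift a f) (shift b g) = shift (a + b) (circConv f g) := by
  funext x
  show ∫ t : 𝕋, f (t - a) * g (x - t - b) = ∫ t : 𝕋, f t * g (x - (a + b) - t)
  have : ∀ t : 𝕋, f (t - a) * g (x - t - b)
      = (fun u => f u * g (x - (a + b) - u)) (t - a) := by
    intro t
    simp only
    congr 2
    abel
  simp_rw [this]
  exact integral_sub_right_eq_self (fun u => f u * g (x - (a + b) - u)) a

-- α power mod n
lemma pow_mod {α : ℂ} {n : ℕ} (hα : α ^ n = 1) (a : ℕ) : α ^ a = α ^ (a % n) := by
  conv_lhs => rw [← Nat.mod_add_div a n, pow_add, pow_mul, hα, one_pow, mul_one]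

lemma proj_mod {n : ℕ} (hn : 1 ≤ n) (a : ℕ) :
    proj (2 * π * a / n) = proj (2 * π * (a % n : ℕ) / n) := by
  have hn' : (n : ℝ) ≠ 0 := by positivity
  have key : 2 * π * a / n = 2 * π * (a % n : ℕ) / n + (a / n : ℕ) • (2 * π) := by
    have h : (a : ℝ) = (a % n : ℕ) + (n : ℝ) * ((a / n : ℕ) : ℝ) := by
      exact_mod_cast (Nat.mod_add_div a n).symm
    rw [nsmul_eq_mul]
    field_simp
    rw [h]
  show ((2 * π * a / n : ℝ) : 𝕋) = _
  rw [key]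
  push_cast [AddCircle.coe_add]
  rw [AddCircle.coe_nsmul]
  simp only [AddCircle.coe_period (2*π), smul_zero, add_zero]
  rfl

lemma key_reindex {n : ℕ} (hn : 1 ≤ n) {α : ℂ} (hα : α ^ n = 1) (h : 𝕋 → ℂ) (j : Fin n)
    (x : 𝕋) :
    ∑ k : Fin n, α ^ ((j : ℕ) + (k : ℕ)) * shift (proj (2 * π * ((j : ℕ) + (k : ℕ)) / n)) h x
    = ∑ m : Fin n, α ^ (m : ℕ) * shift (proj (2 * π * m / n)) h x := by
  haveI : NeZero n := ⟨by omega⟩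
  rw [← Equiv.sum_comp (Equiv.addLeft j)
    (fun m : Fin n => α ^ (m : ℕ) * shift (proj (2 * π * m / n)) h x)]
  apply Finset.sum_congr rfl
  intro k _
  have hval : ((Equiv.addLeft j k : Fin n) : ℕ) = ((j : ℕ) + (k : ℕ)) % n := by
    simp [Fin.add_def, Equiv.addLeft]
  rw [hval, ← pow_mod hα, ← proj_mod hn]
  push_cast
  ring_nf

-- pointwise right-linearity pieces
lemma circConv_sum {ι : Type*} (s : Finset ι) (f : 𝕋 → ℂ) (g : ι → 𝕋 → ℂ)
    (hf : Continuous f) (hg : ∀ i, Continuous (g i)) (x : 𝕋) :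
    circConv f (fun y => ∑ i ∈ s, g i y) x = ∑ i ∈ s, circConv f (g i) x := by
  show ∫ t : 𝕋, f t * ∑ i ∈ s, g i (x - t) = _
  simp_rw [Finset.mul_sum]
  exact integral_finset_sum s fun i _ =>
    cont_integrable_s4 (hf.mul ((hg i).comp (continuous_const.sub continuous_id)))

lemma circConv_const_mul (c : ℂ) (f g : 𝕋 → ℂ) (x : 𝕋) :
    circConv f (fun y => c * g y) x = c * circConv f g x := by
  show ∫ t : 𝕋, f t * (c * g (x - t)) = c * ∫ t : 𝕋, f t * g (x - t)
  simp_rw [mul_left_comm]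
  exact integral_const_mul c _

lemma circConv_const_mul_left (c : ℂ) (f g : 𝕋 → ℂ) (x : 𝕋) :
    circConv (fun y => c * f y) g x = c * circConv f g x := by
  show ∫ t : 𝕋, (c * f t) * g (x - t) = c * ∫ t : 𝕋, f t * g (x - t)
  simp_rw [mul_assoc]
  exact integral_const_mul c _

lemma circConv_sum_left {ι : Type*} (s : Finset ι) (f : ι → 𝕋 → ℂ) (g : 𝕋 → ℂ)
    (hf : ∀ i, Continuous (f i)) (hg : Continuous g) (x : 𝕋) :
    circConv (fun y => ∑ i ∈ s, f i y) g x = ∑ i ∈ s, circConv (f i) g x := by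
  show ∫ t : 𝕋, (∑ i ∈ s, f i t) * g (x - t) = _
  simp_rw [Finset.sum_mul]
  exact integral_finset_sum s fun i _ =>
    cont_integrable_s4 ((hf i).mul (hg.comp (continuous_const.sub continuous_id)))

theorem conv_power_of_root_of_unity_combination (n p : ℕ) (hn : 1 ≤ n) (hp : 1 ≤ p)
    (f : 𝕋 → ℂ) (hf : Continuous f) (α : ℂ) (hα : α ^ n = 1) :
    circConvPow (fun x => ∑ k : Fin n, α ^ (k : ℕ) * shift (proj (2 * π * k / n)) f x) (p - 1)
    = fun x => (n : ℂ) ^ (p - 1) *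
        ∑ j : Fin n, α ^ (j : ℕ) * shift (proj (2 * π * j / n)) (circConvPow f (p - 1)) x := by
  set F : 𝕋 → ℂ := fun x => ∑ k : Fin n, α ^ (k : ℕ) * shift (proj (2 * π * k / n)) f x with hF
  have hFc : Continuous F := by
    apply continuous_finset_sum
    intro k _
    exact continuous_const.mul (shift_cont _ hf)
  -- general claim for all q
  have main : ∀ q : ℕ, circConvPow F q
      = fun x => (n : ℂ) ^ q *
          ∑ j : Fin n, α ^ (j : ℕ) * shift (proj (2 * π * j / n)) (circConvPow f q) x := by
    intro q
    induction q with
    | zero => simp [circConvPow, hF]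
    | succ q ih =>
      funext x
      have hshc : ∀ j : Fin n, Continuous (fun y => α ^ (j : ℕ) *
          shift (proj (2 * π * j / n)) (circConvPow f q) y) := fun j =>
        continuous_const.mul (shift_cont _ (circConvPow_cont hf q))
      show circConv (circConvPow F q) F x = _
      rw [ih]
      have step1 : circConv (fun y => (n : ℂ) ^ q *
          ∑ j : Fin n, α ^ (j : ℕ) * shift (proj (2 * π * j / n)) (circConvPow f q) y) F x
          = (n : ℂ) ^ q * ∑ j : Fin n, circConv
            (fun y => α ^ (j : ℕ) * shift (proj (2 * π * j / n)) (circConvPow f q) y) F x := by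
        rw [circConv_const_mul_left]
        congr 1
        exact circConv_sum_left Finset.univ _ F hshc hFc x
      rw [step1]
      have step2 : ∀ j : Fin n, circConv
          (fun y => α ^ (j : ℕ) * shift (proj (2 * π * j / n)) (circConvPow f q) y) F x
          = ∑ m : Fin n, α ^ (m : ℕ) * shift (proj (2 * π * m / n)) (circConvPow f (q + 1)) x := by
        intro j
        rw [circConv_const_mul_left]
        rw [hF]
        rw [circConv_sum Finset.univ _ (fun (k : Fin n) y => α ^ (k : ℕ) * shift (proj (2 * π * k / n)) f y) (shift_cont _ (circConvPow_cont hf q))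
          (fun k => continuous_const.mul (shift_cont _ hf)) x]
        have inner : ∀ k : Fin n,
            circConv (shift (proj (2 * π * j / n)) (circConvPow f q))
              (fun y => α ^ (k : ℕ) * shift (proj (2 * π * k / n)) f y) x
            = α ^ (k : ℕ) * shift (proj (2 * π * ((j : ℕ) + (k : ℕ)) / n))
                (circConvPow f (q + 1)) x := by
          intro k
          rw [circConv_const_mul]
          congr 1
          have hadd : proj (2 * π * j / n) + proj (2 * π * k / n)
              = proj (2 * π * ((j : ℕ) + (k : ℕ)) / n) := by
            show ((2 * π * j / n : ℝ) : 𝕋) + ((2 * π * k / n : ℝ) : 𝕋) = _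
            rw [← AddCircle.coe_add]
            congr 1
            push_cast
            ring
          rw [← hadd, show circConvPow f (q + 1) = circConv (circConvPow f q) f from rfl,
            ← circConv_shift]
        simp_rw [inner]
        rw [Finset.mul_sum]
        simp_rw [← mul_assoc, ← pow_add]
        exact key_reindex hn hα (circConvPow f (q + 1)) j x
      simp_rw [step2]
      rw [Finset.sum_const, Finset.card_univ, Fintype.card_fin, nsmul_eq_mul]
      push_cast
      ring
  exact main (p - 1)

end
end
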